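/- Re-encryption correctness: let K_S = Σᵢ kᵢ·B and let (C₁, C₂) = (r·B, X + r·K_S) be a ciphertext under the collective key. If starting from (0, C₂), each party i ∈ {1,...,t} samples vᵢ and updates the pair to (C₁^{(i−1)} + vᵢ·B, C₂^{(i−1)} − r·Kᵢ + vᵢ·U) where Kᵢ = kᵢ·B, then the final result is (v·B, X + v·U) with v = v₁+⋯+v_t, i.e., a valid encryption of X under public key U. -/
import Mathlib

private lemma foldl_general (G : Type*) [AddCommGroup G] (B U : G) (r : ℤ)
    (l : List (ℤ × ℤ)) : ∀ a b : G,
    l.foldl (fun p kv => (p.1 + kv.2 • B, p.2 - r • (kv.1 • B) + kv.2 • U)) (a, b)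
    = (a + ((l.map Prod.snd).sum) • B,
       b - r • (((l.map Prod.fst).sum) • B) + ((l.map Prod.snd).sum) • U) := by
  induction l with
  | nil => intro a b; simp
  | cons hd tl ih =>
    intro a b
    simp only [List.foldl_cons, List.map_cons, List.sum_cons, ih]
    rw [Prod.ext_iff]
    refine ⟨?_, ?_⟩ <;> simp only [add_smul, smul_add] <;> abel

/-- Re-encryption correctness: starting from `(0, X + r • K_S)` with
`K_S = (∑ i, k i) • B`, after each party `i` updates the pair to
`(C₁ + vᵢ • B, C₂ - r • Kᵢ + vᵢ • U)` with `Kᵢ = kᵢ • B`, the final result is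
`((∑ i, v i) • B, X + (∑ i, v i) • U)`, a valid encryption of `X` under `U`. -/
theorem reencryption_correct (G : Type*) [AddCommGroup G]
    (B U X : G) (r : ℤ) (t : ℕ) (k v : Fin t → ℤ) :
    (List.ofFn (fun i => (k i, v i))).foldl
      (fun p kv => (p.1 + kv.2 • B, p.2 - r • (kv.1 • B) + kv.2 • U))
      ((0 : G), X + r • ((∑ i, k i) • B))
    = ((∑ i, v i) • B, X + (∑ i, v i) • U) := by
  rw [foldl_general]
  have hk : ((List.ofFn (fun i => (k i, v i))).map Prod.fst).sum = ∑ i, k i := by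
    simp [List.map_ofFn, List.sum_ofFn, Function.comp]
  have hv : ((List.ofFn (fun i => (k i, v i))).map Prod.snd).sum = ∑ i, v i := by
    simp [List.map_ofFn, List.sum_ofFn, Function.comp]
  rw [hk, hv]
  simp
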